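/- Let β ∈ (0,1), l_k = 4^k, γ_k = exp(4^{βk}), ρ_k = 1 - 4^{-k} + iγ_k, and let f_C(v) = (1 - v^{-1})/log v - 2 ∑_{k≥1} (g(v^{1/l_k})/l_k) v^{-1/l_k} cos(γ_k log v) for v ≥ 1. Then there exists δ ∈ (0,1) such that for all v ≥ e⁴, (1-δ)(1-v^{-1})/log v ≤ f_C(v) ≤ (1+δ)(1-v^{-1})/log v. In particular f_C(v) > 0 for v > 1. -/

import Mathlib

open Real

/-- Multiplicative convolution `(f*h)(x) = ∫₁^x f(x/u) h(u) du/u`. -/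
noncomputable def mconv (f h : ℝ → ℝ) : ℝ → ℝ := fun x => ∫ u in (1:ℝ)..x, f (x / u) * h u / u

/-- `χ`, the indicator function of `[e, e²]`. -/
noncomputable def chi : ℝ → ℝ := Set.indicator (Set.Icc (Real.exp 1) (Real.exp 2)) 1

/-- `chiPow n = χ^{*(n+1)}`. -/
noncomputable def chiPow : ℕ → (ℝ → ℝ)
  | 0 => chi
  | n + 1 => mconv (chiPow n) chi

lemma chi_nonneg (u : ℝ) : 0 ≤ chi u := by
  unfold chi; by_cases h : u ∈ Set.Icc (exp 1) (exp 2) <;> simp [h]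

lemma chi_le_one (u : ℝ) : chi u ≤ 1 := by
  unfold chi; by_cases h : u ∈ Set.Icc (exp 1) (exp 2) <;> simp [h]

lemma chi_eq_zero_of_lt {u : ℝ} (h : u < exp 1) : chi u = 0 := by
  unfold chi
  apply Set.indicator_of_notMem
  simp only [Set.mem_Icc, not_and_or]
  exact Or.inl (not_le.mpr h)

lemma chi_eq_zero_of_gt {u : ℝ} (h : exp 2 < u) : chi u = 0 := by
  unfold chi
  apply Set.indicator_of_notMem
  simp only [Set.mem_Icc, not_and_or]
  exact Or.inr (not_le.mpr h)

lemma chi_pos_mem {u : ℝ} (h : chi u ≠ 0) : exp 1 ≤ u ∧ u ≤ exp 2 := by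
  by_contra hc
  rw [not_and_or, not_le, not_le] at hc
  rcases hc with hc | hc
  · exact h (chi_eq_zero_of_lt hc)
  · exact h (chi_eq_zero_of_gt hc)

lemma chiPow_succ_def (n : ℕ) (u : ℝ) :
    chiPow (n + 1) u = ∫ s in (1:ℝ)..u, chiPow n (u / s) * chi s / s := rfl

/-- `chiPow n` vanishes strictly below `e^(n+1)`. -/
lemma chiPow_zero_below : ∀ n : ℕ, ∀ u : ℝ, u < exp (n + 1) → chiPow n u = 0 := by
  intro n
  induction n with
  | zero => intro u hu; exact chi_eq_zero_of_lt (by simpa using hu)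
  | succ n ih =>
    intro u hu
    rw [chiPow_succ_def]
    have : ∀ s ∈ Set.uIcc (1:ℝ) u, chiPow n (u / s) * chi s / s = 0 := by
      intro s hs
      by_cases hc : chi s = 0
      · rw [hc]; ring
      · obtain ⟨hs1, _⟩ := chi_pos_mem hc
        have he : (0:ℝ) < exp 1 := exp_pos 1
        have hs0 : 0 < s := lt_of_lt_of_le he hs1
        -- s ∈ uIcc 1 u, s ≥ e > 1 hence u ≥ s
        have hu1 : s ≤ max 1 u := (Set.mem_uIcc.mp hs).elim (fun h => le_trans h.2 (le_max_right _ _)) (fun h => le_trans h.2 (le_max_left _ _))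
        have hsu : s ≤ u := by
          rcases le_or_gt s u with h | h
          · exact h
          · have : s ≤ 1 := by
              rcases max_cases 1 u with ⟨hm, _⟩ | ⟨hm, _⟩
              · rw [hm] at hu1; exact hu1
              · rw [hm] at hu1; linarith
            linarith [exp_one_gt_d9.le.trans hs1]
        have hun : 0 ≤ u := le_trans hs0.le hsu
        have : u / s < exp (n + 1) := by
          have h1 : u / s ≤ u / exp 1 := by
            apply div_le_div_of_nonneg_left hun he hs1
          have h2 : u / exp 1 < exp (n + 1) := by
            rw [div_lt_iff₀ he, ← exp_add]
            have : ((n:ℝ) + 1 + 1) = ((n:ℝ) + 1 + 1) := rfl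
            calc u < exp (↑(n+1) + 1) := hu
            _ = exp ((n:ℝ) + 1 + 1) := by push_cast; ring_nf
          linarith
        rw [ih _ this]; ring
    rw [intervalIntegral.integral_congr this]
    simp

/-- `chiPow n` vanishes strictly above `e^(2n+2)`. -/
lemma chiPow_zero_above : ∀ n : ℕ, ∀ u : ℝ, exp (2 * n + 2) < u → chiPow n u = 0 := by
  intro n
  induction n with
  | zero => intro u hu; exact chi_eq_zero_of_gt (by norm_num at hu ⊢; linarith)
  | succ n ih =>
    intro u hu
    have hu1 : (1:ℝ) < u := by
      have : (1:ℝ) < exp (2 * ↑(n+1) + 2) := by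
        rw [show (1:ℝ) = exp 0 from (exp_zero).symm]
        exact exp_lt_exp.mpr (by positivity)
      linarith
    rw [chiPow_succ_def]
    have : ∀ s ∈ Set.uIcc (1:ℝ) u, chiPow n (u / s) * chi s / s = 0 := by
      intro s hs
      by_cases hc : chi s = 0
      · rw [hc]; ring
      · obtain ⟨hs1, hs2⟩ := chi_pos_mem hc
        have he : (0:ℝ) < exp 1 := exp_pos 1
        have hs0 : 0 < s := lt_of_lt_of_le he hs1
        have h2 : exp (2 * n + 2) < u / s := by
          rw [lt_div_iff₀ hs0]
          calc exp (2 * ↑n + 2) * s ≤ exp (2 * ↑n + 2) * exp 2 := by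
                nlinarith [exp_pos (2 * (n:ℝ) + 2)]
          _ = exp (2 * ↑(n+1) + 2) := by rw [← exp_add]; push_cast; ring_nf
          _ < u := hu
        rw [ih _ h2]; ring
    rw [intervalIntegral.integral_congr this]
    simp

/-- `chiPow (n+1)` vanishes also at `u = e^(n+2)` (indeed for all `u ≤ e^(n+2)`). -/
lemma chiPow_succ_zero (n : ℕ) (u : ℝ) (hu : u ≤ exp (n + 2)) : chiPow (n + 1) u = 0 := by
  rcases lt_or_eq_of_le hu with h | h
  · refine chiPow_zero_below (n+1) u ?_
    have : ((n:ℝ) + 1 + 1) = (n:ℝ) + 2 := by ring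
    push_cast
    rw [this]
    exact h
  have key : ∀ᵐ s ∂(MeasureTheory.volume : MeasureTheory.Measure ℝ),
      s ∈ Set.uIoc (1:ℝ) u → chiPow n (u / s) * chi s / s = 0 := by
    have hsub : {s : ℝ | ¬ (s ∈ Set.uIoc (1:ℝ) u → chiPow n (u / s) * chi s / s = 0)}
        ⊆ {exp 1} := by
      intro s hs
      simp only [Set.mem_setOf_eq] at hs
      push_neg at hs
      obtain ⟨hmem, hne⟩ := hs
      by_contra hse
      apply hne
      by_cases hc : chi s = 0
      · rw [hc]; ring
      · obtain ⟨hs1, _⟩ := chi_pos_mem hc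
        have he : (0:ℝ) < exp 1 := exp_pos 1
        have hs1' : exp 1 < s := lt_of_le_of_ne hs1 (Ne.symm (by simpa using hse))
        have h2 : u / s < exp (n + 1) := by
          rw [div_lt_iff₀ (by linarith)]
          calc u ≤ exp (↑n + 2) := hu
          _ = exp (↑n + 1) * exp 1 := by rw [← exp_add]; ring_nf
          _ < exp (↑n + 1) * s := by nlinarith [exp_pos ((n:ℝ) + 1)]
        rw [chiPow_zero_below n _ h2]; ring
    have h0 : (MeasureTheory.volume : MeasureTheory.Measure ℝ) {exp 1} = 0 :=
      MeasureTheory.measure_singleton _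
    rw [MeasureTheory.ae_iff]
    exact MeasureTheory.measure_mono_null hsub h0
  rw [chiPow_succ_def, intervalIntegral.integral_congr_ae key]
  simp

noncomputable def chiDiv : ℝ → ℝ := (Set.Icc (exp 1) (exp 2)).indicator (fun s => 1 / s)

lemma chiDiv_eq (s : ℝ) : chi s / s = chiDiv s := by
  unfold chi chiDiv
  by_cases h : s ∈ Set.Icc (exp 1) (exp 2) <;> simp [h]

lemma chiDiv_nonneg (s : ℝ) : 0 ≤ chiDiv s := by
  unfold chiDiv
  by_cases h : s ∈ Set.Icc (exp 1) (exp 2)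
  · have : 0 < s := lt_of_lt_of_le (exp_pos 1) h.1
    simp [h]; positivity
  · simp [h]

lemma chiDiv_integrable : MeasureTheory.Integrable chiDiv := by
  apply MeasureTheory.IntegrableOn.integrable_indicator _ measurableSet_Icc
  apply ContinuousOn.integrableOn_compact isCompact_Icc
  apply ContinuousOn.div continuousOn_const continuousOn_id
  intro x hx
  have := exp_pos 1
  intro h; simp only [id] at h; rw [h] at hx; exact absurd hx.1 (by linarith)

lemma integral_chiDiv_le (u : ℝ) (hu : 1 ≤ u) : ∫ s in (1:ℝ)..u, chiDiv s ≤ 1 := by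
  have h1 : ∫ s in (1:ℝ)..u, chiDiv s ≤ ∫ s, chiDiv s := by
    rw [intervalIntegral.integral_of_le hu]
    exact MeasureTheory.setIntegral_le_integral chiDiv_integrable
      (Filter.Eventually.of_forall chiDiv_nonneg)
  have h2 : ∫ s, chiDiv s = 1 := by
    unfold chiDiv
    rw [MeasureTheory.integral_indicator measurableSet_Icc]
    have he : exp 1 ≤ exp 2 := by apply exp_le_exp.mpr; norm_num
    rw [MeasureTheory.integral_Icc_eq_integral_Ioc, ← intervalIntegral.integral_of_le he]
    have h0 : (0:ℝ) ∉ Set.uIcc (exp 1) (exp 2) :=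
      Set.notMem_uIcc_of_lt (exp_pos 1) (exp_pos 2)
    rw [integral_one_div h0, ← exp_sub]
    norm_num
  linarith

lemma chiPow_nonneg : ∀ n : ℕ, ∀ u : ℝ, 0 ≤ chiPow n u := by
  intro n
  induction n with
  | zero => exact chi_nonneg
  | succ n ih =>
    intro u
    rcases le_or_gt u 1 with h | h
    · rw [chiPow_zero_below (n+1) u]
      have : (1:ℝ) < exp (↑(n+1) + 1) := by
        rw [show (1:ℝ) = exp 0 from (exp_zero).symm]
        exact exp_lt_exp.mpr (by positivity)
      linarith
    · rw [chiPow_succ_def]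
      apply intervalIntegral.integral_nonneg h.le
      intro s hs
      have hs1 : (1:ℝ) ≤ s := hs.1
      have := chi_nonneg s
      have := ih (u / s)
      positivity

lemma chiPow_le_one : ∀ n : ℕ, ∀ u : ℝ, chiPow n u ≤ 1 := by
  intro n
  induction n with
  | zero => exact chi_le_one
  | succ n ih =>
    intro u
    rcases le_or_gt u 1 with h | h
    · rw [chiPow_zero_below (n+1) u]; · norm_num
      have : (1:ℝ) < exp (↑(n+1) + 1) := by
        rw [show (1:ℝ) = exp 0 from (exp_zero).symm]
        exact exp_lt_exp.mpr (by positivity)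
      linarith
    · rw [chiPow_succ_def]
      by_cases hint : IntervalIntegrable (fun s => chiPow n (u / s) * chi s / s)
          MeasureTheory.volume 1 u
      · have hle : ∫ s in (1:ℝ)..u, chiPow n (u / s) * chi s / s
            ≤ ∫ s in (1:ℝ)..u, chiDiv s := by
          apply intervalIntegral.integral_mono_on h.le hint
            chiDiv_integrable.intervalIntegrable
          intro s hs
          rw [← chiDiv_eq]
          have hs1 : (1:ℝ) ≤ s := hs.1
          have hs0 : (0:ℝ) < s := by linarith
          have h1 := chiPow_nonneg n (u / s)
          have h2 := ih (u / s)
          have h3 := chi_nonneg s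
          rw [div_le_div_iff_of_pos_right hs0]
          nlinarith
        exact le_trans hle (integral_chiDiv_le u h.le)
      · rw [intervalIntegral.integral_undef hint]; norm_num

/-- `g(u) = ∑_{n≥1} χ^{*n}(u)/n`. -/
noncomputable def g (u : ℝ) : ℝ := ∑' n : ℕ, chiPow n u / (n + 1)

lemma g_nonneg (u : ℝ) : 0 ≤ g u := by
  apply tsum_nonneg
  intro n
  have := chiPow_nonneg n u
  positivity

lemma g_exp_eq (x : ℝ) (N : ℕ) (hN : x < N + 1) :
    g (exp x) = ∑ n ∈ Finset.range N, chiPow n (exp x) / (n + 1) := by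
  apply tsum_eq_sum
  intro n hn
  rw [Finset.mem_range, not_lt] at hn
  rw [chiPow_zero_below n (exp x) (by
    apply exp_lt_exp.mpr
    have : (N:ℝ) ≤ n := by exact_mod_cast hn
    linarith)]
  simp

lemma g_exp_zero {x : ℝ} (hx : x < 1) : g (exp x) = 0 := by
  rw [g_exp_eq x 0 (by norm_num; linarith)]
  simp

lemma term_le (x : ℝ) (n : ℕ) : chiPow n (exp x) / (n + 1) ≤ 1 / ((n:ℝ) + 1) := by
  have h : (0:ℝ) < (n:ℝ) + 1 := by positivity
  gcongr
  exact chiPow_le_one n _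

lemma term_nonneg (x : ℝ) (n : ℕ) : 0 ≤ chiPow n (exp x) / (n + 1) := by
  have := chiPow_nonneg n (exp x)
  positivity

lemma g_le_one {x : ℝ} (hx : x ≤ 4) : g (exp x) ≤ 1 := by
  rcases le_or_gt x 2 with h | h
  · rw [g_exp_eq x 2 (by norm_num; linarith)]
    rw [Finset.sum_range_succ, Finset.sum_range_one]
    have h1 : chiPow 1 (exp x) = 0 := by
      apply chiPow_succ_zero 0
      apply exp_le_exp.mpr; norm_num; linarith
    rw [h1]
    have := chi_le_one (exp x)
    have h0 : chiPow 0 (exp x) = chi (exp x) := rfl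
    rw [h0]
    push_cast
    norm_num
    linarith
  · rw [g_exp_eq x 4 (by push_cast; linarith)]
    have h0 : chiPow 0 (exp x) = 0 := chi_eq_zero_of_gt (exp_lt_exp.mpr h)
    have h3 : chiPow 3 (exp x) = 0 := by
      apply chiPow_succ_zero 2
      apply exp_le_exp.mpr; norm_num; linarith
    rw [Finset.sum_range_succ, Finset.sum_range_succ, Finset.sum_range_succ,
      Finset.sum_range_one, h0, h3]
    have t1 := term_le x 1
    have t2 := term_le x 2
    have e1 : chiPow 1 (exp x) / ((1:ℕ) + 1) ≤ 1/2 := by exact_mod_cast t1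
    have e2 : chiPow 2 (exp x) / ((2:ℕ) + 1) ≤ 1/3 := by
      have : ((2:ℕ):ℝ) + 1 = 3 := by norm_num
      calc chiPow 2 (exp x) / ((2:ℕ) + 1) ≤ 1 / (((2:ℕ):ℝ) + 1) := t2
      _ = 1/3 := by norm_num
    push_cast at e1 e2 ⊢
    norm_num at e1 e2 ⊢
    linarith

lemma g_le_46 {x : ℝ} (h4 : 4 ≤ x) (h6 : x < 6) : g (exp x) ≤ 77/60 := by
  rw [g_exp_eq x 6 (by push_cast; linarith)]
  have h0 : chiPow 0 (exp x) = 0 := chi_eq_zero_of_gt (exp_lt_exp.mpr (by linarith))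
  have h5 : chiPow 5 (exp x) = 0 := by
    apply chiPow_succ_zero 4
    apply exp_le_exp.mpr; norm_num; linarith
  rw [Finset.sum_range_succ, Finset.sum_range_succ, Finset.sum_range_succ,
    Finset.sum_range_succ, Finset.sum_range_succ, Finset.sum_range_one, h0, h5]
  have t1 := term_le x 1
  have t2 := term_le x 2
  have t3 := term_le x 3
  have t4 := term_le x 4
  push_cast at t1 t2 t3 t4 ⊢
  norm_num at t1 t2 t3 t4 ⊢
  linarith

lemma g_le_two {x : ℝ} (hx : 0 < x) : g (exp x) ≤ 2 := by
  have hfl : x < (⌊x⌋₊ : ℝ) + 1 := Nat.lt_floor_add_one x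
  rw [g_exp_eq x ⌊x⌋₊ hfl]
  have hterm : ∀ n ∈ Finset.range ⌊x⌋₊, chiPow n (exp x) / ((n:ℝ) + 1) ≤ 2 / x := by
    intro n _
    rcases lt_or_ge (2 * (n:ℝ) + 2) x with h | h
    · rw [chiPow_zero_above n (exp x) (exp_lt_exp.mpr h)]
      rw [zero_div]
      positivity
    · calc chiPow n (exp x) / ((n:ℝ) + 1) ≤ 1 / ((n:ℝ) + 1) := term_le x n
      _ ≤ 2 / x := by
          rw [div_le_div_iff₀ (by positivity) hx]
          linarith
  calc ∑ n ∈ Finset.range ⌊x⌋₊, chiPow n (exp x) / ((n:ℝ) + 1)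
      ≤ ∑ _n ∈ Finset.range ⌊x⌋₊, 2 / x := Finset.sum_le_sum hterm
  _ = (⌊x⌋₊ : ℝ) * (2 / x) := by rw [Finset.sum_const, Finset.card_range]; ring
  _ ≤ x * (2 / x) := by
      have := Nat.floor_le hx.le
      have : (0:ℝ) ≤ 2 / x := by positivity
      nlinarith [Nat.floor_le hx.le]
  _ = 2 := by field_simp

lemma exp1_gt : (2.71828:ℝ) < exp 1 := by
  have := exp_one_gt_d9
  linarith

lemma exp4_gt : (54:ℝ) < exp 4 := by
  have h : exp 4 = exp 1 ^ 4 := by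
    rw [← Real.exp_nat_mul]; norm_num
  rw [h]
  calc (54:ℝ) < 2.71828^4 := by norm_num
  _ < exp 1 ^ 4 := by
      apply pow_lt_pow_left₀ exp1_gt (by norm_num)
      norm_num

lemma exp6_gt : (398:ℝ) < exp 6 := by
  have h : exp 6 = exp 4 * exp 2 := by rw [← exp_add]; norm_num
  have h2 : exp 2 = exp 1 ^ 2 := by rw [← Real.exp_nat_mul]; norm_num
  have h4 := exp4_gt
  have ha : (7.389:ℝ) < exp 1 ^ 2 := by
    calc (7.389:ℝ) < 2.71828^2 := by norm_num
    _ < exp 1 ^ 2 := by apply pow_lt_pow_left₀ exp1_gt (by norm_num); norm_num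
  rw [h, h2]
  nlinarith [exp_pos 4, exp_pos 1]

lemma exp8_gt : (2916:ℝ) < exp 8 := by
  have h : exp 8 = exp 4 * exp 4 := by rw [← exp_add]; norm_num
  have := exp4_gt
  rw [h]; nlinarith

lemma xexp_le {a x : ℝ} (ha : 1 ≤ a) (hx : a ≤ x) : x * exp (-x) ≤ a * exp (-a) := by
  have e1 : exp (x - a) * exp (-x) = exp (-a) := by rw [← exp_add]; ring_nf
  have h2 : x - a + 1 ≤ exp (x - a) := add_one_le_exp (x - a)
  have h3 : (0:ℝ) < exp (-x) := exp_pos _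
  have key : x ≤ a * exp (x - a) := by
    nlinarith [mul_le_mul_of_nonneg_left h2 (by linarith : (0:ℝ) ≤ a)]
  calc x * exp (-x) ≤ (a * exp (x - a)) * exp (-x) := by nlinarith
  _ = a * exp (-a) := by rw [mul_assoc, e1]

lemma twoxexp_le {x : ℝ} (hx : 16 ≤ x) : 2 * x * exp (-x) ≤ exp (-(x/2)) := by
  have h1 : 1 + x/6 ≤ exp (x/6) := by linarith [add_one_le_exp (x/6)]
  have h2 : (1 + x/6)^3 ≤ (exp (x/6))^3 := by
    apply pow_le_pow_left₀ (by linarith) h1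
  have h3 : (exp (x/6))^3 = exp (x/2) := by
    rw [← Real.exp_nat_mul]; congr 1; push_cast; ring
  have hx2 : 16 * x ≤ x^2 := by nlinarith
  have hx3 : 16 * x^2 ≤ x^3 := by nlinarith [sq_nonneg x]
  have h4 : 2 * x ≤ (1 + x/6)^3 := by nlinarith
  have h5 : 2 * x ≤ exp (x/2) := by rw [← h3]; linarith
  have e1 : exp (x/2) * exp (-x) = exp (-(x/2)) := by rw [← exp_add]; ring_nf
  have h6 : (0:ℝ) < exp (-x) := exp_pos _
  calc 2 * x * exp (-x) ≤ exp (x/2) * exp (-x) := by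
        apply mul_le_mul_of_nonneg_right h5 h6.le
  _ = exp (-(x/2)) := e1

lemma pow4_ge_8j (j : ℕ) (hj : 2 ≤ j) : (8:ℝ) * j ≤ (4:ℝ)^j := by
  induction j with
  | zero => omega
  | succ j ih =>
    rcases Nat.lt_or_ge j 2 with h | h
    · interval_cases j
      · omega
      · norm_num
    · have := ih h
      have hp : (0:ℝ) < (4:ℝ)^j := by positivity
      rw [pow_succ]
      push_cast
      push_cast at this
      have hj2 : (2:ℝ) ≤ (j:ℝ) := by exact_mod_cast h
      linarith

noncomputable def cb : ℕ → ℝ := fun j => if j = 0 then 0.37 else 0.111 * (1/50)^(j-1)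

lemma cb_nonneg (j : ℕ) : 0 ≤ cb j := by
  unfold cb
  split
  · norm_num
  · positivity

lemma psi_bound (j : ℕ) (x : ℝ) (h1 : (4:ℝ)^j ≤ x) (h2 : x < (4:ℝ)^(j+1)) :
    g (exp x) * exp (-x) * x ≤ cb j := by
  have hx0 : (0:ℝ) < x := lt_of_lt_of_le (by positivity) h1
  have hg0 : 0 ≤ g (exp x) := g_nonneg _
  have hexp0 : (0:ℝ) < exp (-x) := exp_pos _
  match j with
  | 0 =>
    norm_num at h1 h2
    have hg1 : g (exp x) ≤ 1 := g_le_one (by linarith)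
    have hxe : x * exp (-x) ≤ 1 * exp (-1) := xexp_le le_rfl h1
    have he : exp (-1) ≤ 0.37 := by
      rw [exp_neg]
      rw [inv_le_comm₀ (exp_pos 1) (by norm_num)]
      have := exp1_gt
      linarith
    show g (exp x) * exp (-x) * x ≤ 0.37
    nlinarith
  | 1 =>
    have hc : cb 1 = 0.111 := by unfold cb; norm_num
    rw [hc]
    norm_num at h1 h2
    rcases lt_or_ge x 6 with h6 | h6
    · have hg : g (exp x) ≤ 77/60 := g_le_46 h1 h6
      have hxe : x * exp (-x) ≤ 4 * exp (-4) := xexp_le (by norm_num) h1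
      have he : exp (-4) ≤ 1/54 := by
        rw [exp_neg, inv_le_comm₀ (exp_pos 4) (by norm_num)]
        have := exp4_gt; linarith
      nlinarith
    · rcases lt_or_ge x 8 with h8 | h8
      · have hg : g (exp x) ≤ 2 := g_le_two hx0
        have hxe : x * exp (-x) ≤ 6 * exp (-6) := xexp_le (by norm_num) h6
        have he : exp (-6) ≤ 1/398 := by
          rw [exp_neg, inv_le_comm₀ (exp_pos 6) (by norm_num)]
          have := exp6_gt; linarith
        nlinarith
      · have hg : g (exp x) ≤ 2 := g_le_two hx0
        have hxe : x * exp (-x) ≤ 8 * exp (-8) := xexp_le (by norm_num) h8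
        have he : exp (-8) ≤ 1/2916 := by
          rw [exp_neg, inv_le_comm₀ (exp_pos 8) (by norm_num)]
          have := exp8_gt; linarith
        nlinarith
  | (m+2) =>
    set j := m + 2 with hj
    have hj2 : 2 ≤ j := by omega
    have h16 : (16:ℝ) ≤ (4:ℝ)^j := by
      calc (16:ℝ) = 4^2 := by norm_num
      _ ≤ 4^j := pow_le_pow_right₀ (by norm_num) hj2
    have hx16 : (16:ℝ) ≤ x := le_trans h16 h1
    have hg : g (exp x) ≤ 2 := g_le_two hx0
    have step1 : g (exp x) * exp (-x) * x ≤ 2 * x * exp (-x) := by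
      nlinarith [mul_nonneg (mul_nonneg (sub_nonneg.mpr hg) hexp0.le) hx0.le]
    have step2 : 2 * x * exp (-x) ≤ exp (-(x/2)) := twoxexp_le hx16
    have step3 : exp (-(x/2)) ≤ exp (-(4 * j)) := by
      apply exp_le_exp.mpr
      have := pow4_ge_8j j hj2
      have : (8:ℝ) * j ≤ x := le_trans this h1
      linarith
    have step4 : exp (-(4 * (j:ℝ))) = (exp (-4))^j := by
      rw [← Real.exp_nat_mul]; congr 1; push_cast; ring
    have he4 : exp (-4) ≤ 1/50 := by
      rw [exp_neg, inv_le_comm₀ (exp_pos 4) (by norm_num)]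
      have := exp4_gt; linarith
    have step5 : (exp (-4))^j ≤ (1/50:ℝ)^j := by
      apply pow_le_pow_left₀ (exp_pos _).le he4
    have hcb : cb (m+2) = 0.111 * (1/50)^(m+1) := by
      unfold cb
      norm_num
    have step6 : ((1:ℝ)/50)^j ≤ 0.111 * (1/50)^(m+1) := by
      have e : ((1:ℝ)/50)^j = (1/50) * (1/50)^(m+1) := by
        rw [hj, ← pow_succ']
      rw [e]
      have hp : (0:ℝ) ≤ (1/50:ℝ)^(m+1) := by positivity
      nlinarith
    rw [hj, hcb]
    calc g (exp x) * exp (-x) * x ≤ 2 * x * exp (-x) := step1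
    _ ≤ exp (-(x/2)) := step2
    _ ≤ exp (-(4 * j)) := step3
    _ = (exp (-4))^j := step4
    _ ≤ (1/50:ℝ)^j := step5
    _ ≤ 0.111 * (1/50)^(m+1) := step6

lemma cb_sum (m : ℕ) : ∑ j ∈ Finset.range m, cb j ≤ 0.37 + 0.111 * (50/49) := by
  match m with
  | 0 => simp; norm_num
  | n+1 =>
    rw [Finset.sum_range_succ']
    have hcb0 : cb 0 = 0.37 := by unfold cb; norm_num
    have hcbi : ∀ i, cb (i+1) = 0.111 * (1/50)^i := by
      intro i; unfold cb; norm_num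
    rw [hcb0]
    have : ∑ i ∈ Finset.range n, cb (i+1) = 0.111 * ∑ i ∈ Finset.range n, (1/50:ℝ)^i := by
      rw [Finset.mul_sum]
      exact Finset.sum_congr rfl (fun i _ => hcbi i)
    rw [this]
    have hg : ∑ i ∈ Finset.range n, (1/50:ℝ)^i ≤ 50/49 := by
      rw [geom_sum_eq (by norm_num)]
      have h1 : (0:ℝ) ≤ (1/50:ℝ)^n := by positivity
      have e : (((1:ℝ)/50)^n - 1)/((1:ℝ)/50 - 1) = (1 - (1/50:ℝ)^n) * (50/49) := by
        ring
      rw [e]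
      nlinarith
    nlinarith

/-- `γ_k = exp(4^{βk})`. -/
noncomputable def γ (β : ℝ) (k : ℕ) : ℝ := Real.exp ((4:ℝ) ^ (β * k))

/-- `f_C(v) = (1 - v⁻¹)/log v - 2 ∑_{k≥1} (g(v^{1/4^k})/4^k) v^{-1/4^k} cos(γ_k log v)`. -/
noncomputable def fC (β : ℝ) (v : ℝ) : ℝ :=
  (1 - v⁻¹) / Real.log v -
    2 * ∑' k : ℕ, g (v ^ (((4:ℝ) ^ (k + 1))⁻¹)) / (4:ℝ) ^ (k + 1) *
      v ^ (-((4:ℝ) ^ (k + 1))⁻¹) * Real.cos (γ β (k + 1) * Real.log v)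

lemma T_est (β v : ℝ) (hv : exp 4 ≤ v) :
    |∑' k : ℕ, g (v ^ (((4:ℝ) ^ (k + 1))⁻¹)) / (4:ℝ) ^ (k + 1) *
      v ^ (-((4:ℝ) ^ (k + 1))⁻¹) * Real.cos (γ β (k + 1) * Real.log v)|
      ≤ (0.37 + 0.111 * (50/49)) / Real.log v := by
  have hv0 : (0:ℝ) < v := lt_of_lt_of_le (exp_pos 4) hv
  have hL4 : (4:ℝ) ≤ Real.log v := by
    calc (4:ℝ) = Real.log (exp 4) := (log_exp 4).symm
    _ ≤ Real.log v := Real.log_le_log (exp_pos 4) hv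
  set F : ℕ → ℝ := fun k => g (v ^ (((4:ℝ) ^ (k + 1))⁻¹)) / (4:ℝ) ^ (k + 1) *
      v ^ (-((4:ℝ) ^ (k + 1))⁻¹) * Real.cos (γ β (k + 1) * Real.log v) with hF
  set L : ℝ := Real.log v with hLdef
  have hL0 : (0:ℝ) < L := by linarith
  set n : ℕ := ⌊L⌋₊ with hn
  have hn4 : 4 ≤ n := Nat.le_floor (by exact_mod_cast hL4)
  set m : ℕ := Nat.log 4 n with hm
  have hm1 : 1 ≤ m := by
    rw [hm]
    exact (Nat.le_log_iff_pow_le (by norm_num) (by omega)).mpr (by simpa using hn4)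
  have h4m : (4:ℝ)^m ≤ L := by
    have h1 : (4:ℕ)^m ≤ n := Nat.pow_log_le_self 4 (by omega)
    have h2 : ((4:ℕ)^m : ℝ) ≤ (n:ℝ) := by exact_mod_cast h1
    have h3 : (n:ℝ) ≤ L := Nat.floor_le hL0.le
    push_cast at h2; linarith
  have hLm : L < (4:ℝ)^(m+1) := by
    have h1 : n < 4^(m+1) := Nat.lt_pow_succ_log_self (by norm_num) n
    have h3 : L < (n:ℝ) + 1 := Nat.lt_floor_add_one L
    have h4 : ((n:ℝ) + 1) ≤ (4:ℝ)^(m+1) := by exact_mod_cast h1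
    linarith
  have hrw : ∀ k : ℕ, F k = g (exp (L * ((4:ℝ)^(k+1))⁻¹)) / (4:ℝ)^(k+1) *
      exp (-(L * ((4:ℝ)^(k+1))⁻¹)) * Real.cos (γ β (k+1) * L) := by
    intro k
    have e1 : v ^ (((4:ℝ)^(k+1))⁻¹) = exp (L * ((4:ℝ)^(k+1))⁻¹) := by
      rw [rpow_def_of_pos hv0]
    have e2 : v ^ (-((4:ℝ)^(k+1))⁻¹) = exp (-(L * ((4:ℝ)^(k+1))⁻¹)) := by
      rw [rpow_def_of_pos hv0]; congr 1; ring
    rw [hF]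
    simp only [e1, e2]
  have hzero : ∀ k, m ≤ k → F k = 0 := by
    intro k hk
    rw [hrw k]
    have hp0 : (0:ℝ) < (4:ℝ)^(k+1) := by positivity
    have hx1 : L * ((4:ℝ)^(k+1))⁻¹ < 1 := by
      have hpow : (4:ℝ)^(m+1) ≤ (4:ℝ)^(k+1) := pow_le_pow_right₀ (by norm_num) (by omega)
      have hlt : L < (4:ℝ)^(k+1) := lt_of_lt_of_le hLm hpow
      calc L * ((4:ℝ)^(k+1))⁻¹ < (4:ℝ)^(k+1) * ((4:ℝ)^(k+1))⁻¹ := by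
            apply mul_lt_mul_of_pos_right hlt (by positivity)
      _ = 1 := mul_inv_cancel₀ hp0.ne'
    rw [g_exp_zero hx1]
    simp
  have hsum : ∑' k, F k = ∑ k ∈ Finset.range m, F k := by
    apply tsum_eq_sum
    intro k hk
    exact hzero k (by simpa [Finset.mem_range, not_lt] using hk)
  have hbound : ∀ k ∈ Finset.range m, |F k| ≤ cb (m - 1 - k) / L := by
    intro k hk
    rw [Finset.mem_range] at hk
    rw [hrw k]
    have hp0 : (0:ℝ) < (4:ℝ)^(k+1) := by positivity
    set x : ℝ := L * ((4:ℝ)^(k+1))⁻¹ with hx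
    have hinv : ((4:ℝ)^(k+1))⁻¹ = x / L := by
      rw [hx]; field_simp
    have hxlow : (4:ℝ)^(m-1-k) ≤ x := by
      have hsplit : (4:ℝ)^m = (4:ℝ)^(m-1-k) * (4:ℝ)^(k+1) := by
        rw [← pow_add]; congr 1; omega
      calc (4:ℝ)^(m-1-k) = (4:ℝ)^m * ((4:ℝ)^(k+1))⁻¹ := by
            rw [hsplit]; field_simp
      _ ≤ L * ((4:ℝ)^(k+1))⁻¹ := by
            apply mul_le_mul_of_nonneg_right h4m (by positivity)
    have hxhigh : x < (4:ℝ)^((m-1-k)+1) := by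
      have hsplit : (4:ℝ)^(m+1) = (4:ℝ)^((m-1-k)+1) * (4:ℝ)^(k+1) := by
        rw [← pow_add]; congr 1; omega
      calc x = L * ((4:ℝ)^(k+1))⁻¹ := hx
      _ < (4:ℝ)^(m+1) * ((4:ℝ)^(k+1))⁻¹ := by
            apply mul_lt_mul_of_pos_right hLm (by positivity)
      _ = (4:ℝ)^((m-1-k)+1) := by rw [hsplit]; field_simp
    have hpsi := psi_bound (m-1-k) x hxlow hxhigh
    have hg0 := g_nonneg (exp x)
    have hcos : |Real.cos (γ β (k+1) * L)| ≤ 1 := abs_cos_le_one _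
    have hE : (0:ℝ) < exp (-x) := exp_pos _
    calc |g (exp x) / (4:ℝ)^(k+1) * exp (-x) * Real.cos (γ β (k+1) * L)|
        = (g (exp x) / (4:ℝ)^(k+1) * exp (-x)) * |Real.cos (γ β (k+1) * L)| := by
          rw [abs_mul]; congr 1; rw [abs_of_nonneg (by positivity)]
      _ ≤ (g (exp x) / (4:ℝ)^(k+1) * exp (-x)) * 1 := by
          apply mul_le_mul_of_nonneg_left hcos (by positivity)
      _ = g (exp x) * exp (-x) * x / L := by
          rw [div_eq_mul_inv, hinv]; ring
      _ ≤ cb (m-1-k) / L := by gcongr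
  calc |∑' k, F k| = |∑ k ∈ Finset.range m, F k| := by rw [hsum]
  _ ≤ ∑ k ∈ Finset.range m, |F k| := Finset.abs_sum_le_sum_abs _ _
  _ ≤ ∑ k ∈ Finset.range m, cb (m-1-k) / L := Finset.sum_le_sum hbound
  _ = (∑ k ∈ Finset.range m, cb (m-1-k)) / L := by rw [Finset.sum_div]
  _ = (∑ j ∈ Finset.range m, cb j) / L := by rw [Finset.sum_range_reflect]
  _ ≤ (0.37 + 0.111 * (50/49)) / L := by gcongr; exact cb_sum m

/-- Chebyshev bounds for `f_C`: there is `δ ∈ (0,1)` with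
`(1-δ)(1-v⁻¹)/log v ≤ f_C(v) ≤ (1+δ)(1-v⁻¹)/log v` for `v ≥ e⁴`; and `f_C(v) > 0` for `v > 1`. -/
theorem fC_Chebyshev (β : ℝ) (hβ : β ∈ Set.Ioo (0:ℝ) 1) :
    (∃ δ ∈ Set.Ioo (0:ℝ) 1, ∀ v : ℝ, Real.exp 4 ≤ v →
      (1 - δ) * ((1 - v⁻¹) / Real.log v) ≤ fC β v ∧
        fC β v ≤ (1 + δ) * ((1 - v⁻¹) / Real.log v)) ∧
    ∀ v : ℝ, 1 < v → 0 < fC β v := by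
  have key : ∀ v : ℝ, Real.exp 4 ≤ v →
      (1 - 0.99) * ((1 - v⁻¹) / Real.log v) ≤ fC β v ∧
        fC β v ≤ (1 + 0.99) * ((1 - v⁻¹) / Real.log v) := by
    intro v hv
    have hv0 : (0:ℝ) < v := lt_of_lt_of_le (exp_pos 4) hv
    have hv54 : (54:ℝ) < v := lt_of_lt_of_le exp4_gt hv
    have hL4 : (4:ℝ) ≤ Real.log v := by
      calc (4:ℝ) = Real.log (exp 4) := (log_exp 4).symm
      _ ≤ Real.log v := Real.log_le_log (exp_pos 4) hv
    have hL0 : (0:ℝ) < Real.log v := by linarith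
    have hT := T_est β v hv
    set T := ∑' k : ℕ, g (v ^ (((4:ℝ) ^ (k + 1))⁻¹)) / (4:ℝ) ^ (k + 1) *
      v ^ (-((4:ℝ) ^ (k + 1))⁻¹) * Real.cos (γ β (k + 1) * Real.log v) with hTdef
    have hfc : fC β v = (1 - v⁻¹) / Real.log v - 2 * T := rfl
    set M : ℝ := (1 - v⁻¹) / Real.log v with hM
    have hinv : v⁻¹ < 1/54 := by
      rw [inv_lt_comm₀ hv0 (by norm_num)]
      norm_num
      linarith
    have habs : |2 * T| ≤ 0.99 * M := by
      calc |2 * T| = 2 * |T| := by rw [abs_mul]; norm_num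
      _ ≤ 2 * ((0.37 + 0.111 * (50/49)) / Real.log v) := by linarith
      _ = (2 * (0.37 + 0.111 * (50/49))) / Real.log v := by ring
      _ ≤ (0.99 * (1 - v⁻¹)) / Real.log v := by
          have hnum : 2 * (0.37 + 0.111 * (50/49)) ≤ 0.99 * (1 - v⁻¹) := by nlinarith
          exact div_le_div_of_nonneg_right hnum hL0.le

      _ = 0.99 * M := by rw [hM]; ring
    have hpair := abs_le.mp habs
    constructor
    · rw [hfc]; linarith
    · rw [hfc]; linarith
  constructor
  · exact ⟨0.99, by norm_num, key⟩
  · intro v hv1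
    have hv0 : (0:ℝ) < v := by linarith
    have hL0 : 0 < Real.log v := Real.log_pos hv1
    have hM : 0 < (1 - v⁻¹) / Real.log v := by
      apply div_pos _ hL0
      have h1 : 1/v < 1 := by rw [div_lt_one hv0]; linarith
      have h2 : v⁻¹ = 1/v := (one_div v).symm
      linarith
    rcases le_or_gt (exp 4) v with h | h
    · have hlow := (key v h).1
      nlinarith
    · have hL4 : Real.log v < 4 := by
        calc Real.log v < Real.log (exp 4) := Real.log_lt_log hv0 h
        _ = 4 := log_exp 4
      have hzero : ∀ k : ℕ, g (v ^ (((4:ℝ) ^ (k + 1))⁻¹)) / (4:ℝ) ^ (k + 1) *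
          v ^ (-((4:ℝ) ^ (k + 1))⁻¹) * Real.cos (γ β (k + 1) * Real.log v) = 0 := by
        intro k
        have hp0 : (0:ℝ) < (4:ℝ)^(k+1) := by positivity
        have h4le : (4:ℝ) ≤ (4:ℝ)^(k+1) := by
          calc (4:ℝ) = 4^1 := (pow_one 4).symm
          _ ≤ 4^(k+1) := pow_le_pow_right₀ (by norm_num) (by omega)
        have e1 : v ^ (((4:ℝ)^(k+1))⁻¹) = exp (Real.log v * ((4:ℝ)^(k+1))⁻¹) :=
          rpow_def_of_pos hv0 _
        have hx1 : Real.log v * ((4:ℝ)^(k+1))⁻¹ < 1 := by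
          have h1 : Real.log v * ((4:ℝ)^(k+1))⁻¹ < 4 * ((4:ℝ)^(k+1))⁻¹ :=
            mul_lt_mul_of_pos_right hL4 (by positivity)
          have h2 : (4:ℝ) * ((4:ℝ)^(k+1))⁻¹ ≤ 1 := by
            rw [← div_eq_mul_inv, div_le_one hp0]
            exact h4le
          linarith
        rw [e1, g_exp_zero hx1]
        simp
      have htsum : (∑' k : ℕ, g (v ^ (((4:ℝ) ^ (k + 1))⁻¹)) / (4:ℝ) ^ (k + 1) *
          v ^ (-((4:ℝ) ^ (k + 1))⁻¹) * Real.cos (γ β (k + 1) * Real.log v)) = (0:ℝ) := by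
        calc (∑' k : ℕ, g (v ^ (((4:ℝ) ^ (k + 1))⁻¹)) / (4:ℝ) ^ (k + 1) *
            v ^ (-((4:ℝ) ^ (k + 1))⁻¹) * Real.cos (γ β (k + 1) * Real.log v))
            = ∑' _k : ℕ, (0:ℝ) := tsum_congr hzero
        _ = 0 := tsum_zero
      have hfc : fC β v = (1 - v⁻¹) / Real.log v - 2 * 0 := by
        rw [fC, htsum]
      rw [hfc]
      linarith
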